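/- Let 0 < α < 1, k ∈ ℕ, and let X be a metric space that is free of k-point SRA(α)-subspaces. Suppose {x₁,…,x_{k−1}} ⊆ X, with the induced metric, satisfies the SRA(α/2)-condition, and let R = min_{1 ≤ i < j ≤ k−1} d(xᵢ,xⱼ). Then the ball B_{αR/6}(x₁) admits an embedding into ℝ^{k−2} with bi-Lipschitz distortion at most √(k−2)/α; moreover the map φ : X → ℝ^{k−2} defined by φᵢ(y) = d(y, x_{i+1}) realizes this: it is √(k−2)-Lipschitz and satisfies ‖φ(y₁)−φ(y₂)‖ ≥ α·d(y₁,y₂) for all y₁,y₂ ∈ B_{αR/6}(x₁). -/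
import Mathlib


open Metric Set

/-- A subset `Y` of a metric space satisfies the `SRA(β)`-condition. -/
def SRAOn {X : Type*} [MetricSpace X] (β : ℝ) (Y : Set X) : Prop :=
  ∀ a ∈ Y, ∀ b ∈ Y, ∀ c ∈ Y,
    dist a b ≤ max (dist a c + β * dist c b) (β * dist a c + dist c b)

/-- A subset `S` of a metric space is free of `k`-point `SRA(β)`-subspaces:
every `k`-point subset contains `x, z, y` with
`d(x,y) > max (d(x,z) + β d(z,y)) (β d(x,z) + d(z,y))`. -/
def SRAFree {X : Type*} [MetricSpace X] (k : ℕ) (β : ℝ) (S : Set X) : Prop :=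
  ∀ Y : Finset X, ↑Y ⊆ S → Y.card = k →
    ∃ x ∈ Y, ∃ z ∈ Y, ∃ y ∈ Y,
      dist x y > max (dist x z + β * dist z y) (β * dist x z + dist z y)

set_option maxHeartbeats 1000000 in
theorem stmt_4 {X : Type*} [MetricSpace X] (n : ℕ) (α : ℝ) (hα : 0 < α) (hα1 : α < 1)
    (hfree : SRAFree (n + 2) α (univ : Set X))
    (x : Fin (n + 1) → X)
    (hSRA : ∀ i j l : Fin (n + 1), dist (x i) (x j) ≤
      max (dist (x i) (x l) + α / 2 * dist (x l) (x j))
        (α / 2 * dist (x i) (x l) + dist (x l) (x j)))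
    (R : ℝ)
    (hR : IsLeast {d : ℝ | ∃ i j : Fin (n + 1), i ≠ j ∧ d = dist (x i) (x j)} R)
    (φ : X → EuclideanSpace ℝ (Fin n))
    (hφ : ∀ y : X, φ y = (WithLp.equiv 2 (Fin n → ℝ)).symm fun i => dist y (x i.succ)) :
    (∀ y z : X, dist (φ y) (φ z) ≤ Real.sqrt n * dist y z) ∧
    ∀ y₁ ∈ ball (x 0) (α * R / 6), ∀ y₂ ∈ ball (x 0) (α * R / 6),
      α * dist y₁ y₂ ≤ dist (φ y₁) (φ y₂) := by
  classical
  have hφcoord : ∀ y : X, ∀ j : Fin n, φ y j = dist y (x j.succ) := by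
    intro y j; rw [hφ y]; rfl
  constructor
  · -- Lipschitz part
    intro y z
    rw [EuclideanSpace.dist_eq]
    have h1 : ∀ j : Fin n, dist (φ y j) (φ z j) ^ 2 ≤ dist y z ^ 2 := by
      intro j
      rw [hφcoord, hφcoord, Real.dist_eq]
      have h0 : |dist y (x j.succ) - dist z (x j.succ)| ≤ dist y z :=
        abs_dist_sub_le y z (x j.succ)
      nlinarith [abs_nonneg (dist y (x j.succ) - dist z (x j.succ))]
    calc Real.sqrt (∑ j, dist (φ y j) (φ z j) ^ 2)
        ≤ Real.sqrt (∑ _j : Fin n, dist y z ^ 2) :=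
          Real.sqrt_le_sqrt (Finset.sum_le_sum fun j _ => h1 j)
      _ = Real.sqrt ((n : ℝ) * dist y z ^ 2) := by
          rw [Finset.sum_const, Finset.card_univ, Fintype.card_fin, nsmul_eq_mul]
      _ = Real.sqrt n * dist y z := by
          rw [Real.sqrt_mul (by positivity), Real.sqrt_sq dist_nonneg]
  · -- bi-Lipschitz lower bound
    intro y₁ hy₁ y₂ hy₂
    rw [mem_ball] at hy₁ hy₂
    have hRpos : 0 < R := by
      by_contra h
      push_neg at h
      have h2 : α * R ≤ 0 := mul_nonpos_of_nonneg_of_nonpos hα.le h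
      linarith [dist_nonneg (x := y₁) (y := x 0)]
    by_cases hyy : y₁ = y₂
    · subst hyy; simp [dist_self]
    have hRle : ∀ i j : Fin (n + 1), i ≠ j → R ≤ dist (x i) (x j) := fun i j h =>
      hR.2 ⟨i, j, h, rfl⟩
    have hlow : ∀ i : Fin n, R ≤ dist (x 0) (x i.succ) := fun i =>
      hRle 0 i.succ (Fin.succ_ne_zero i).symm
    set r := α * R / 6 with hrdef
    have hrR : r < R := by
      rw [hrdef]
      linarith [mul_lt_mul_of_pos_right hα1 hRpos]
    have hrpos : 0 < r := by positivity
    -- distance from ball points to the x i.succ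
    have hxy : ∀ a : X, dist a (x 0) < r → ∀ i : Fin n, R - r ≤ dist a (x i.succ) := by
      intro a ha i
      have ht := dist_triangle (x 0) a (x i.succ)
      rw [dist_comm (x 0) a] at ht
      linarith [hlow i]
    have hyT : ∀ a : X, dist a (x 0) < r → ∀ i : Fin n, a ≠ x i.succ := by
      intro a ha i hc
      have h2 := hxy a ha i
      rw [hc, dist_self] at h2
      linarith
    have hxinj : Function.Injective (fun i : Fin n => x i.succ) := by
      intro i j hij
      by_contra h
      have hne : i.succ ≠ j.succ := fun hc => h (Fin.succ_injective n hc)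
      have h2 := hRle i.succ j.succ hne
      simp only at hij
      rw [hij, dist_self] at h2
      linarith
    set T : Finset X := Finset.univ.image (fun i : Fin n => x i.succ) with hT
    have hTmem : ∀ a : X, dist a (x 0) < r → a ∉ T := by
      intro a ha hmem
      rw [hT, Finset.mem_image] at hmem
      obtain ⟨i, _, hi⟩ := hmem
      exact hyT a ha i hi.symm
    set S : Finset X := insert y₁ (insert y₂ T) with hS
    have hcard : S.card = n + 2 := by
      rw [hS, Finset.card_insert_of_notMem, Finset.card_insert_of_notMem (hTmem y₂ hy₂)]
      · rw [hT, Finset.card_image_of_injective _ hxinj, Finset.card_univ, Fintype.card_fin]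
      · simp only [Finset.mem_insert]
        push_neg
        exact ⟨hyy, hTmem y₁ hy₁⟩
    obtain ⟨p, hp, z, hz, q, hq, hviol⟩ := hfree S (subset_univ _) hcard
    have hv1 : dist p z + α * dist z q < dist p q := (le_max_left _ _).trans_lt hviol
    have hv2 : α * dist p z + dist z q < dist p q := (le_max_right _ _).trans_lt hviol
    -- distinctness of p, z, q
    have hpz : p ≠ z := by
      rintro rfl
      rw [dist_self] at hv2
      linarith
    have hzq : z ≠ q := by
      rintro rfl
      rw [dist_self] at hv1
      linarith
    have hpq : p ≠ q := by
      rintro rfl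
      rw [dist_self] at hv1
      linarith [dist_nonneg (x := p) (y := z),
        mul_nonneg hα.le (dist_nonneg (x := z) (y := p))]
    -- decode membership
    have hmem : ∀ a ∈ S, (a = y₁ ∨ a = y₂) ∨ ∃ i : Fin n, a = x i.succ := by
      intro a ha
      rw [hS, Finset.mem_insert, Finset.mem_insert] at ha
      rcases ha with h | h | h
      · exact Or.inl (Or.inl h)
      · exact Or.inl (Or.inr h)
      · rw [hT, Finset.mem_image] at h
        obtain ⟨i, _, hi⟩ := h
        exact Or.inr ⟨i, hi.symm⟩
    have hball : ∀ a : X, a = y₁ ∨ a = y₂ → dist a (x 0) < r := by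
      rintro a (rfl | rfl) <;> assumption
    -- the key combinatorial claim
    have hkey : ∃ i : Fin n, α * dist y₁ y₂ < |dist y₁ (x i.succ) - dist y₂ (x i.succ)| := by
      -- contradiction lemma: all three are x's
      have hXXX : ∀ i l j : Fin (n + 1),
          dist (x i) (x l) + α * dist (x l) (x j) < dist (x i) (x j) →
          α * dist (x i) (x l) + dist (x l) (x j) < dist (x i) (x j) → False := by
        intro i l j w1 w2
        rcases le_max_iff.mp (hSRA i j l) with h | h <;>
          linarith [mul_nonneg hα.le (dist_nonneg (x := x l) (y := x j)),
            mul_nonneg hα.le (dist_nonneg (x := x i) (y := x l))]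
      -- contradiction lemma: x, y, x (middle in the ball)
      have hXYX : ∀ a : X, dist a (x 0) < r → ∀ i j : Fin n,
          dist (x i.succ) a + α * dist a (x j.succ) < dist (x i.succ) (x j.succ) →
          α * dist (x i.succ) a + dist a (x j.succ) < dist (x i.succ) (x j.succ) → False := by
        intro a ha i j w1 w2
        have hα2 : (0:ℝ) ≤ α / 2 := by positivity
        have f1 : dist (x i.succ) (x 0) ≤ dist (x i.succ) a + dist a (x 0) :=
          dist_triangle _ _ _
        have f2 : dist (x 0) (x j.succ) ≤ dist a (x 0) + dist a (x j.succ) := by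
          rw [dist_comm a (x 0)]; exact dist_triangle _ _ _
        have f4 : R - r ≤ dist a (x j.succ) := hxy a ha j
        have f5 : R - r ≤ dist (x i.succ) a := by
          rw [dist_comm (x i.succ) a]; exact hxy a ha i
        have hrr : α * r = α * α * R / 6 := by rw [hrdef]; ring
        have keyprod : α * R * α < α * R * 1 :=
          mul_lt_mul_of_pos_left hα1 (mul_pos hα hRpos)
        have hmp := mul_pos hα hRpos
        have p3 : α / 2 * dist a (x 0) ≤ α / 2 * r :=
          mul_le_mul_of_nonneg_left ha.le hα2
        rcases le_max_iff.mp (hSRA i.succ j.succ 0) with h | h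
        · have p1 : α / 2 * dist (x 0) (x j.succ) ≤
              α / 2 * (dist a (x 0) + dist a (x j.succ)) :=
            mul_le_mul_of_nonneg_left f2 hα2
          have p2 : α / 2 * (R - r) ≤ α / 2 * dist a (x j.succ) :=
            mul_le_mul_of_nonneg_left f4 hα2
          nlinarith [w1, h, f1, p1, p2, p3, ha, hrdef, hrr, keyprod, hmp]
        · have p1 : α / 2 * dist (x i.succ) (x 0) ≤
              α / 2 * (dist (x i.succ) a + dist a (x 0)) :=
            mul_le_mul_of_nonneg_left f1 hα2
          have p2 : α / 2 * (R - r) ≤ α / 2 * dist (x i.succ) a :=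
            mul_le_mul_of_nonneg_left f5 hα2
          nlinarith [w2, h, f2, p1, p2, p3, ha, hrdef, hrr, keyprod, hmp]
      -- contradiction lemma: y, x, x (the ball point at an end)
      have hYXX : ∀ a : X, dist a (x 0) < r → ∀ i j : Fin n, x i.succ ≠ x j.succ →
          dist a (x i.succ) + α * dist (x i.succ) (x j.succ) < dist a (x j.succ) →
          α * dist a (x i.succ) + dist (x i.succ) (x j.succ) < dist a (x j.succ) → False := by
        intro a ha i j hne w1 w2
        have hα2 : (0:ℝ) ≤ α / 2 := by positivity
        have hij : i.succ ≠ j.succ := fun hc => hne (congrArg x hc)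
        have hB : R ≤ dist (x i.succ) (x j.succ) := hRle _ _ hij
        have hu : R ≤ dist (x 0) (x i.succ) := hlow i
        have hC : dist a (x j.succ) ≤ dist a (x 0) + dist (x 0) (x j.succ) :=
          dist_triangle _ _ _
        have hA : dist (x 0) (x i.succ) ≤ dist a (x 0) + dist a (x i.succ) := by
          rw [dist_comm a (x 0)]; exact dist_triangle _ _ _
        have hrr : α * r = α * α * R / 6 := by rw [hrdef]; ring
        have keyprod : α * R * α < α * R * 1 :=
          mul_lt_mul_of_pos_left hα1 (mul_pos hα hRpos)
        have hmp := mul_pos hα hRpos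
        rcases le_max_iff.mp (hSRA 0 j.succ i.succ) with h | h
        · have pB : α / 2 * R ≤ α / 2 * dist (x i.succ) (x j.succ) :=
            mul_le_mul_of_nonneg_left hB hα2
          nlinarith [w1, h, hC, hA, pB, ha, hrdef, hmp]
        · have pA : α * dist (x 0) (x i.succ) ≤ α * (dist a (x 0) + dist a (x i.succ)) :=
            mul_le_mul_of_nonneg_left hA hα.le
          have pu : α / 2 * R ≤ α / 2 * dist (x 0) (x i.succ) :=
            mul_le_mul_of_nonneg_left hu hα2
          have pw : α * dist a (x 0) < α * r := mul_lt_mul_of_pos_left ha hα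
          nlinarith [w2, h, hC, pA, pu, pw, ha, hrdef, hrr, keyprod, hmp]
      -- contradiction lemma: y, x, y
      have hYXY : ∀ a b : X, dist a (x 0) < r → dist b (x 0) < r → ∀ i : Fin n,
          dist a (x i.succ) + α * dist (x i.succ) b < dist a b → False := by
        intro a b ha hb i w1
        have hab : dist a b ≤ dist a (x 0) + dist b (x 0) := by
          rw [dist_comm b (x 0)]; exact dist_triangle a (x 0) b
        have ha' : R - r ≤ dist a (x i.succ) := hxy a ha i
        have pnn : 0 ≤ α * dist (x i.succ) b := mul_nonneg hα.le dist_nonneg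
        have keyR : α * R < 1 * R := mul_lt_mul_of_pos_right hα1 hRpos
        linarith [w1, hab, ha, hb, ha', pnn, hrdef, keyR, hRpos]
      -- goal-producing lemma: y, y, x
      have hYYX : ∀ a b : X, (a = y₁ ∧ b = y₂) ∨ (a = y₂ ∧ b = y₁) → ∀ i : Fin n,
          α * dist a b + dist b (x i.succ) < dist a (x i.succ) →
          ∃ i : Fin n, α * dist y₁ y₂ < |dist y₁ (x i.succ) - dist y₂ (x i.succ)| := by
        rintro a b hab i w
        rcases hab with ⟨h1, h2⟩ | ⟨h1, h2⟩
        · rw [h1, h2] at w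
          exact ⟨i, lt_of_lt_of_le (by linarith) (le_abs_self _)⟩
        · rw [h1, h2, dist_comm y₂ y₁] at w
          exact ⟨i, lt_of_lt_of_le (by linarith) (neg_le_abs _)⟩
      -- case analysis
      rcases hmem p hp with hpY | ⟨i, rfl⟩ <;> rcases hmem z hz with hzY | ⟨l, rfl⟩ <;>
        rcases hmem q hq with hqY | ⟨j, rfl⟩
      · -- Y Y Y
        exfalso
        rcases hpY with h1 | h1 <;> rcases hzY with h2 | h2 <;> rcases hqY with h3 | h3 <;>
          first
            | exact hpz (h1.trans h2.symm)
            | exact hzq (h2.trans h3.symm)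
            | exact hpq (h1.trans h3.symm)
      · -- Y Y X
        have hab : (p = y₁ ∧ z = y₂) ∨ (p = y₂ ∧ z = y₁) := by
          rcases hpY with h1 | h1 <;> rcases hzY with h2 | h2
          · exact absurd (h1.trans h2.symm) hpz
          · exact Or.inl ⟨h1, h2⟩
          · exact Or.inr ⟨h1, h2⟩
          · exact absurd (h1.trans h2.symm) hpz
        exact hYYX p z hab j hv2
      · -- Y X Y
        exact absurd (hYXY p q (hball p hpY) (hball q hqY) l hv1) not_false
      · -- Y X X
        exact absurd (hYXX p (hball p hpY) l j
          (fun hc => hzq hc) hv1 hv2) not_false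
      · -- X Y Y
        have hab : (q = y₁ ∧ z = y₂) ∨ (q = y₂ ∧ z = y₁) := by
          rcases hqY with h1 | h1 <;> rcases hzY with h2 | h2
          · exact absurd (h2.trans h1.symm) hzq
          · exact Or.inl ⟨h1, h2⟩
          · exact Or.inr ⟨h1, h2⟩
          · exact absurd (h2.trans h1.symm) hzq
        refine hYYX q z hab i ?_
        have e1 : dist q z = dist z q := dist_comm _ _
        have e1m : α * dist q z = α * dist z q := by rw [e1]
        have e2 : dist z (x i.succ) = dist (x i.succ) z := dist_comm _ _
        have e3 : dist q (x i.succ) = dist (x i.succ) q := dist_comm _ _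
        linarith [hv1]
      · -- X Y X
        exact absurd (hXYX z (hball z hzY) i j hv1 hv2) not_false
      · -- X X Y
        exfalso
        refine hYXX q (hball q hqY) l i (fun hc => hpz hc.symm) ?_ ?_
        · have e2 : dist (x l.succ) (x i.succ) = dist (x i.succ) (x l.succ) := dist_comm _ _
          have e2m : α * dist (x l.succ) (x i.succ) = α * dist (x i.succ) (x l.succ) := by
            rw [e2]
          have e1 : dist q (x l.succ) = dist (x l.succ) q := dist_comm _ _
          have e3 : dist q (x i.succ) = dist (x i.succ) q := dist_comm _ _
          linarith [hv2]
        · have e1 : dist q (x l.succ) = dist (x l.succ) q := dist_comm _ _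
          have e1m : α * dist q (x l.succ) = α * dist (x l.succ) q := by rw [e1]
          have e2 : dist (x l.succ) (x i.succ) = dist (x i.succ) (x l.succ) := dist_comm _ _
          have e3 : dist q (x i.succ) = dist (x i.succ) q := dist_comm _ _
          linarith [hv1]
      · -- X X X
        exact absurd (hXXX i.succ l.succ j.succ hv1 hv2) not_false
    -- finish: one coordinate suffices
    obtain ⟨i, hi⟩ := hkey
    have hcoord : |dist y₁ (x i.succ) - dist y₂ (x i.succ)| ≤ dist (φ y₁) (φ y₂) := by
      rw [EuclideanSpace.dist_eq]
      have h1 : |dist y₁ (x i.succ) - dist y₂ (x i.succ)| =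
          Real.sqrt (dist (φ y₁ i) (φ y₂ i) ^ 2) := by
        rw [Real.sqrt_sq_eq_abs, hφcoord, hφcoord, Real.dist_eq, abs_abs]
      rw [h1]
      apply Real.sqrt_le_sqrt
      exact Finset.single_le_sum (fun j _ => sq_nonneg (dist (φ y₁ j) (φ y₂ j)))
        (Finset.mem_univ i)
    linarith
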